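/- (Imaginary part of the dual identity.) Let g be a pointwise-hermitian C¹ metric on ℂⁿ with g = g^R + i·g^I, and let z = x + it : ℝ → ℂⁿ be a C² curve with L(σ) > 0 satisfying the complex geodesic equation. Then for every index γ and every σ: Σ_μ g^R_{μγ̄}(z) D²t^μ + Σ_μ g^I_{μγ̄}(z) D²x^μ = Σ_{α,β} (Φ^{γ+-}_{αβ} + ½·∂^t_γ g^R_{αβ̄}) Dx^α Dx^β + Σ_{α,β} Φ^{γ-+}_{αβ} Dt^α Dt^β − Σ_{α,β} (∂^x_β g^R_{αγ̄} − F^t_{βγα}) Dt^α Dx^β, all coefficient functions evaluated at z(σ). -/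

import Mathlib

open Complex

noncomputable section

/-- The `α`-th standard basis vector of `ℂⁿ`. -/
def eV (n : ℕ) (α : Fin n) : Fin n → ℂ := fun i => if i = α then 1 else 0

/-- `∂^x_α`: partial derivative of `f : ℂⁿ → ℂ` at `z` in the real direction `x^α`. -/
def dX {n : ℕ} (α : Fin n) (f : (Fin n → ℂ) → ℂ) (z : Fin n → ℂ) : ℂ :=
  deriv (fun s : ℝ => f (fun i => z i + (s : ℂ) * eV n α i)) 0

/-- `∂^t_α`: partial derivative of `f : ℂⁿ → ℂ` at `z` in the imaginary direction `t^α`. -/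
def dT {n : ℕ} (α : Fin n) (f : (Fin n → ℂ) → ℂ) (z : Fin n → ℂ) : ℂ :=
  deriv (fun s : ℝ => f (fun i => z i + (s : ℂ) * Complex.I * eV n α i)) 0

/-- Wirtinger derivative `∂_α = ½(∂^x_α − i ∂^t_α)`. -/
def dW {n : ℕ} (α : Fin n) (f : (Fin n → ℂ) → ℂ) (z : Fin n → ℂ) : ℂ :=
  (dX α f z - Complex.I * dT α f z) / 2

/-- Conjugate Wirtinger derivative `∂_ᾱ = ½(∂^x_α + i ∂^t_α)`. -/
def dWbar {n : ℕ} (α : Fin n) (f : (Fin n → ℂ) → ℂ) (z : Fin n → ℂ) : ℂ :=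
  (dX α f z + Complex.I * dT α f z) / 2

/-- The `(i,j)` entry of the metric, as a `ℂ`-valued function `g_{i j̄}`. -/
def gF {n : ℕ} (g : (Fin n → ℂ) → Matrix (Fin n) (Fin n) ℂ) (i j : Fin n) :
    (Fin n → ℂ) → ℂ := fun z => g z i j

/-- The real part `g^R_{i j̄}` of the metric entry, coerced into `ℂ`. -/
def gR {n : ℕ} (g : (Fin n → ℂ) → Matrix (Fin n) (Fin n) ℂ) (i j : Fin n) :
    (Fin n → ℂ) → ℂ := fun z => ((g z i j).re : ℂ)

/-- The imaginary part `g^I_{i j̄}` of the metric entry, coerced into `ℂ`. -/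
def gI {n : ℕ} (g : (Fin n → ℂ) → Matrix (Fin n) (Fin n) ℂ) (i j : Fin n) :
    (Fin n → ℂ) → ℂ := fun z => ((g z i j).im : ℂ)

/-- `g` is pointwise hermitian: `g_{αβ̄} = conj (g_{βᾱ})`. -/
def IsHermitianMetric {n : ℕ} (g : (Fin n → ℂ) → Matrix (Fin n) (Fin n) ℂ) : Prop :=
  ∀ z i j, g z i j = (starRingEnd ℂ) (g z j i)

/-- `g` is continuously differentiable (entrywise, as a map over `ℝ`). -/
def MetricC1 {n : ℕ} (g : (Fin n → ℂ) → Matrix (Fin n) (Fin n) ℂ) : Prop :=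
  ∀ i j, ContDiff ℝ 1 (gF g i j)

/-- Primary field `Φ^{γ++}_{αβ}`. -/
def PhiPP {n : ℕ} (g : (Fin n → ℂ) → Matrix (Fin n) (Fin n) ℂ) (γ α β : Fin n)
    (z : Fin n → ℂ) : ℂ :=
  (dX γ (gR g α β) z - dX α (gR g β γ) z - dX β (gR g α γ) z) / 2

/-- Primary field `Φ^{γ+-}_{αβ}`. -/
def PhiPM {n : ℕ} (g : (Fin n → ℂ) → Matrix (Fin n) (Fin n) ℂ) (γ α β : Fin n)
    (z : Fin n → ℂ) : ℂ :=
  (dX γ (gI g α β) z - dX α (gI g β γ) z - dX β (gI g α γ) z) / 2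

/-- Primary field `Φ^{γ-+}_{αβ}`. -/
def PhiMP {n : ℕ} (g : (Fin n → ℂ) → Matrix (Fin n) (Fin n) ℂ) (γ α β : Fin n)
    (z : Fin n → ℂ) : ℂ :=
  (dT γ (gR g α β) z - dT α (gR g β γ) z - dT β (gR g α γ) z) / 2

/-- Primary field `Φ^{γ--}_{αβ}`. -/
def PhiMM {n : ℕ} (g : (Fin n → ℂ) → Matrix (Fin n) (Fin n) ℂ) (γ α β : Fin n)
    (z : Fin n → ℂ) : ℂ :=
  (dT γ (gI g α β) z - dT α (gI g β γ) z - dT β (gI g α γ) z) / 2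

/-- Secondary field `F^x_{αγβ}`. -/
def Fx {n : ℕ} (g : (Fin n → ℂ) → Matrix (Fin n) (Fin n) ℂ) (α γ β : Fin n)
    (z : Fin n → ℂ) : ℂ :=
  dX γ (gI g α β) z - dX β (gI g α γ) z

/-- Secondary field `F^t_{αγβ}`. -/
def Ft {n : ℕ} (g : (Fin n → ℂ) → Matrix (Fin n) (Fin n) ℂ) (α γ β : Fin n)
    (z : Fin n → ℂ) : ℂ :=
  dT γ (gI g α β) z - dT β (gI g α γ) z

/-- The Lagrangian `L(z,v) = sqrt(Re Σ g_{αβ̄}(z) v^α conj(v^β))`. -/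
def Lag {n : ℕ} (g : (Fin n → ℂ) → Matrix (Fin n) (Fin n) ℂ) (z v : Fin n → ℂ) : ℝ :=
  Real.sqrt (∑ α, ∑ β, g z α β * v α * (starRingEnd ℂ) (v β)).re

/-- Wirtinger derivative with respect to `conj(v^γ)` of a real-valued function on `ℂⁿ`:
`½(∂/∂(Re v^γ) + i·∂/∂(Im v^γ))`. -/
def dWbarR {n : ℕ} (γ : Fin n) (f : (Fin n → ℂ) → ℝ) (v : Fin n → ℂ) : ℂ :=
  ((deriv (fun s : ℝ => f (fun i => v i + (s : ℂ) * eV n γ i)) 0 : ℝ) +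
    Complex.I *
      (deriv (fun s : ℝ => f (fun i => v i + (s : ℂ) * Complex.I * eV n γ i)) 0 : ℝ)) / 2

/-- The Lagrangian speed `L(σ)` of a curve `z : ℝ → ℂⁿ`. -/
def curveL {n : ℕ} (g : (Fin n → ℂ) → Matrix (Fin n) (Fin n) ℂ) (z : ℝ → Fin n → ℂ)
    (σ : ℝ) : ℝ :=
  Lag g (z σ) (fun α => deriv (fun τ => z τ α) σ)

/-- `Dz^α = (1/L)·dz^α/dσ`. -/
def Dz {n : ℕ} (g : (Fin n → ℂ) → Matrix (Fin n) (Fin n) ℂ) (z : ℝ → Fin n → ℂ)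
    (α : Fin n) (σ : ℝ) : ℂ :=
  (curveL g z σ : ℂ)⁻¹ * deriv (fun τ => z τ α) σ

/-- `D²z^α = (1/L)·d/dσ((1/L)·dz^α/dσ)`. -/
def D2z {n : ℕ} (g : (Fin n → ℂ) → Matrix (Fin n) (Fin n) ℂ) (z : ℝ → Fin n → ℂ)
    (α : Fin n) (σ : ℝ) : ℂ :=
  (curveL g z σ : ℂ)⁻¹ *
    deriv (fun τ => (curveL g z τ : ℂ)⁻¹ * deriv (fun s => z s α) τ) σ

/-- `Dx^α = (1/L)·dx^α/dσ`. -/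
def Dx {n : ℕ} (g : (Fin n → ℂ) → Matrix (Fin n) (Fin n) ℂ) (z : ℝ → Fin n → ℂ)
    (α : Fin n) (σ : ℝ) : ℝ :=
  (curveL g z σ)⁻¹ * deriv (fun τ => (z τ α).re) σ

/-- `Dt^α = (1/L)·dt^α/dσ`. -/
def Dt {n : ℕ} (g : (Fin n → ℂ) → Matrix (Fin n) (Fin n) ℂ) (z : ℝ → Fin n → ℂ)
    (α : Fin n) (σ : ℝ) : ℝ :=
  (curveL g z σ)⁻¹ * deriv (fun τ => (z τ α).im) σ

/-- `D²x^α = (1/L)·d/dσ((1/L)·dx^α/dσ)`. -/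
def D2x {n : ℕ} (g : (Fin n → ℂ) → Matrix (Fin n) (Fin n) ℂ) (z : ℝ → Fin n → ℂ)
    (α : Fin n) (σ : ℝ) : ℝ :=
  (curveL g z σ)⁻¹ *
    deriv (fun τ => (curveL g z τ)⁻¹ * deriv (fun s => (z s α).re) τ) σ

/-- `D²t^α = (1/L)·d/dσ((1/L)·dt^α/dσ)`. -/
def D2t {n : ℕ} (g : (Fin n → ℂ) → Matrix (Fin n) (Fin n) ℂ) (z : ℝ → Fin n → ℂ)
    (α : Fin n) (σ : ℝ) : ℝ :=
  (curveL g z σ)⁻¹ *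
    deriv (fun τ => (curveL g z τ)⁻¹ * deriv (fun s => (z s α).im) τ) σ

/-- The complex geodesic equation (Theorem 1's equation) for the curve `z`. -/
def GeodesicEq {n : ℕ} (g : (Fin n → ℂ) → Matrix (Fin n) (Fin n) ℂ)
    (z : ℝ → Fin n → ℂ) : Prop :=
  ∀ (γ : Fin n) (σ : ℝ),
    ∑ μ, g (z σ) μ γ * D2z g z μ σ =
      (∑ α, ∑ β, (dWbar γ (gF g α β) (z σ) - dWbar β (gF g α γ) (z σ)) *
          Dz g z α σ * (starRingEnd ℂ) (Dz g z β σ)) -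
        ∑ α, ∑ β, dW α (gF g β γ) (z σ) * Dz g z α σ * Dz g z β σ

/-- The real part of the metric as a real matrix. -/
def gRmat {n : ℕ} (g : (Fin n → ℂ) → Matrix (Fin n) (Fin n) ℂ) (z : Fin n → ℂ) :
    Matrix (Fin n) (Fin n) ℝ :=
  Matrix.of fun i j => (g z i j).re

/-- The link tensor `ε^η_γ = Σ_ν g^I_{νγ̄} ((g^R)⁻¹)_{νη}`. -/
def eps {n : ℕ} (g : (Fin n → ℂ) → Matrix (Fin n) (Fin n) ℂ) (z : Fin n → ℂ)
    (η γ : Fin n) : ℝ :=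
  ∑ ν, (g z ν γ).im * (gRmat g z)⁻¹ ν η


/-! ### Auxiliary lemmas -/

section Aux

lemma deriv_ofReal_comp' (u : ℝ → ℝ) (x : ℝ) :
    deriv (fun s => ((u s : ℝ) : ℂ)) x = ((deriv u x : ℝ) : ℂ) := by
  by_cases h : DifferentiableAt ℝ u x
  · exact (h.hasDerivAt.ofReal_comp).deriv
  · rw [deriv_zero_of_not_differentiableAt h, deriv_zero_of_not_differentiableAt, ofReal_zero]
    intro hc
    have : DifferentiableAt ℝ (fun s => ((fun w : ℂ => w.re) ∘ fun s => ((u s : ℝ) : ℂ)) s) x :=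
      (Complex.reCLM.differentiable.differentiableAt).comp x hc
    exact h (by simpa using this)

lemma deriv_re_comp (f : ℝ → ℂ) (x : ℝ) (h : DifferentiableAt ℝ f x) :
    deriv (fun s => (f s).re) x = (deriv f x).re := by
  have := (Complex.reCLM.hasFDerivAt.comp_hasDerivAt x h.hasDerivAt)
  simpa [Function.comp_def] using this.deriv

lemma deriv_im_comp (f : ℝ → ℂ) (x : ℝ) (h : DifferentiableAt ℝ f x) :
    deriv (fun s => (f s).im) x = (deriv f x).im := by
  have := (Complex.imCLM.hasFDerivAt.comp_hasDerivAt x h.hasDerivAt)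
  simpa [Function.comp_def] using this.deriv

variable {n : ℕ} (g : (Fin n → ℂ) → Matrix (Fin n) (Fin n) ℂ)

lemma lineX_diff (k : Fin n) (w : Fin n → ℂ) :
    Differentiable ℝ (fun s : ℝ => (fun i => w i + (s : ℂ) * eV n k i)) := by
  rw [differentiable_pi]
  intro i
  exact (differentiable_const _).add (Complex.ofRealCLM.differentiable.mul_const _)

lemma lineT_diff (k : Fin n) (w : Fin n → ℂ) :
    Differentiable ℝ (fun s : ℝ => (fun i => w i + (s : ℂ) * Complex.I * eV n k i)) := by
  rw [differentiable_pi]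
  intro i
  exact (differentiable_const _).add ((Complex.ofRealCLM.differentiable.mul_const _).mul_const _)

lemma dX_gR_real (k i j : Fin n) (w : Fin n → ℂ) :
    ∃ r : ℝ, dX k (gR g i j) w = (r : ℂ) :=
  ⟨_, deriv_ofReal_comp' (fun s => (g (fun i' => w i' + (s:ℂ) * eV n k i') i j).re) 0⟩

lemma dX_gI_real (k i j : Fin n) (w : Fin n → ℂ) :
    ∃ r : ℝ, dX k (gI g i j) w = (r : ℂ) :=
  ⟨_, deriv_ofReal_comp' (fun s => (g (fun i' => w i' + (s:ℂ) * eV n k i') i j).im) 0⟩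

lemma dT_gR_real (k i j : Fin n) (w : Fin n → ℂ) :
    ∃ r : ℝ, dT k (gR g i j) w = (r : ℂ) :=
  ⟨_, deriv_ofReal_comp' (fun s => (g (fun i' => w i' + (s:ℂ)*Complex.I * eV n k i') i j).re) 0⟩

lemma dT_gI_real (k i j : Fin n) (w : Fin n → ℂ) :
    ∃ r : ℝ, dT k (gI g i j) w = (r : ℂ) :=
  ⟨_, deriv_ofReal_comp' (fun s => (g (fun i' => w i' + (s:ℂ)*Complex.I * eV n k i') i j).im) 0⟩

lemma dX_gF_split (hg : MetricC1 g) (k i j : Fin n) (w : Fin n → ℂ) :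
    dX k (gF g i j) w = dX k (gR g i j) w + dX k (gI g i j) w * Complex.I := by
  set F : ℝ → ℂ := fun s => gF g i j (fun i' => w i' + (s:ℂ) * eV n k i') with hF
  have hFd : DifferentiableAt ℝ F 0 :=
    (((hg i j).differentiable one_ne_zero) _).comp 0 ((lineX_diff k w) 0)
  have h1 : dX k (gR g i j) w = (((deriv F 0).re : ℝ) : ℂ) := by
    show deriv (fun s => (((F s).re : ℝ) : ℂ)) 0 = _
    rw [deriv_ofReal_comp', deriv_re_comp F 0 hFd]
  have h2 : dX k (gI g i j) w = (((deriv F 0).im : ℝ) : ℂ) := by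
    show deriv (fun s => (((F s).im : ℝ) : ℂ)) 0 = _
    rw [deriv_ofReal_comp', deriv_im_comp F 0 hFd]
  rw [h1, h2]
  show deriv F 0 = _
  rw [Complex.re_add_im]

lemma dT_gF_split (hg : MetricC1 g) (k i j : Fin n) (w : Fin n → ℂ) :
    dT k (gF g i j) w = dT k (gR g i j) w + dT k (gI g i j) w * Complex.I := by
  set F : ℝ → ℂ := fun s => gF g i j (fun i' => w i' + (s:ℂ) * Complex.I * eV n k i') with hF
  have hFd : DifferentiableAt ℝ F 0 :=
    (((hg i j).differentiable one_ne_zero) _).comp 0 ((lineT_diff k w) 0)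
  have h1 : dT k (gR g i j) w = (((deriv F 0).re : ℝ) : ℂ) := by
    show deriv (fun s => (((F s).re : ℝ) : ℂ)) 0 = _
    rw [deriv_ofReal_comp', deriv_re_comp F 0 hFd]
  have h2 : dT k (gI g i j) w = (((deriv F 0).im : ℝ) : ℂ) := by
    show deriv (fun s => (((F s).im : ℝ) : ℂ)) 0 = _
    rw [deriv_ofReal_comp', deriv_im_comp F 0 hFd]
  rw [h1, h2]
  show deriv F 0 = _
  rw [Complex.re_add_im]

lemma gR_symm (hherm : IsHermitianMetric g) (i j : Fin n) : gR g i j = gR g j i := by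
  funext w; simp [gR, hherm w i j]

lemma gI_antisymm (hherm : IsHermitianMetric g) (i j : Fin n) :
    gI g i j = fun w => -(gI g j i w) := by
  funext w; simp [gI, hherm w i j]

lemma dX_gI_swap (hherm : IsHermitianMetric g) (k i j : Fin n) (w : Fin n → ℂ) :
    dX k (gI g i j) w = -dX k (gI g j i) w := by
  rw [dX, dX, gI_antisymm g hherm i j]
  exact deriv.neg

lemma dT_gI_swap (hherm : IsHermitianMetric g) (k i j : Fin n) (w : Fin n → ℂ) :
    dT k (gI g i j) w = -dT k (gI g j i) w := by
  rw [dT, dT, gI_antisymm g hherm i j]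
  exact deriv.neg

variable (z : ℝ → Fin n → ℂ)

lemma coord_contDiff (hz : ContDiff ℝ 2 z) (α : Fin n) : ContDiff ℝ 2 (fun τ => z τ α) :=
  (ContinuousLinearMap.proj (R := ℝ) (φ := fun _ : Fin n => ℂ) α).contDiff.comp hz

lemma coord_deriv_contDiff (hz : ContDiff ℝ 2 z) (α : Fin n) :
    ContDiff ℝ 1 (deriv (fun τ => z τ α)) := by
  have h2 : ContDiff ℝ ((1:ℕ∞)+1) (fun τ => z τ α) := by
    have := coord_contDiff z hz α
    norm_num at this ⊢; exact this
  exact (contDiff_succ_iff_deriv.mp h2).2.2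

lemma curveL_diff (hg : MetricC1 g) (hz : ContDiff ℝ 2 z)
    (hL : ∀ σ, 0 < curveL g z σ) : Differentiable ℝ (curveL g z) := by
  set u : ℝ → ℝ := fun τ =>
    (∑ α, ∑ β, g (z τ) α β * deriv (fun s => z s α) τ *
      (starRingEnd ℂ) (deriv (fun s => z s β) τ)).re with hu
  have hud : Differentiable ℝ u := by
    have hsum : Differentiable ℝ (fun τ =>
        (∑ α, ∑ β, g (z τ) α β * deriv (fun s => z s α) τ *
          (starRingEnd ℂ) (deriv (fun s => z s β) τ))) := by
      apply Differentiable.fun_sum; intro α _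
      apply Differentiable.fun_sum; intro β _
      have h1 : Differentiable ℝ (fun τ => g (z τ) α β) :=
        ((hg α β).differentiable one_ne_zero).comp (hz.differentiable (by norm_num))
      exact (h1.mul ((coord_deriv_contDiff z hz α).differentiable one_ne_zero)).mul
        ((coord_deriv_contDiff z hz β).differentiable one_ne_zero).star
    exact Complex.reCLM.differentiable.comp hsum
  have hcurve : curveL g z = fun τ => Real.sqrt (u τ) := rfl
  rw [hcurve]
  intro τ
  have hu0 : u τ ≠ 0 := by
    intro h0
    have := hL τ
    rw [hcurve] at this
    simp only [h0, Real.sqrt_zero] at this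
    exact lt_irrefl 0 this
  exact (hud τ).sqrt hu0

lemma Dz_eq (hz : ContDiff ℝ 2 z) (α : Fin n) (σ : ℝ) :
    Dz g z α σ = (Dx g z α σ : ℂ) + (Dt g z α σ : ℂ) * Complex.I := by
  have hd : DifferentiableAt ℝ (fun τ => z τ α) σ :=
    ((coord_contDiff z hz α).differentiable (by norm_num)).differentiableAt
  rw [Dz, Dx, Dt, deriv_re_comp _ _ hd, deriv_im_comp _ _ hd]
  apply Complex.ext <;>
    simp [Complex.mul_re, Complex.mul_im, ← Complex.ofReal_inv] <;> ring

lemma D2z_eq (hg : MetricC1 g) (hz : ContDiff ℝ 2 z) (hL : ∀ σ, 0 < curveL g z σ)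
    (μ : Fin n) (σ : ℝ) :
    D2z g z μ σ = (D2x g z μ σ : ℂ) + (D2t g z μ σ : ℂ) * Complex.I := by
  set h : ℝ → ℂ := fun τ => (curveL g z τ : ℂ)⁻¹ * deriv (fun s => z s μ) τ with hh
  have hzd : ∀ τ, DifferentiableAt ℝ (fun s => z s μ) τ := fun τ =>
    ((coord_contDiff z hz μ).differentiable (by norm_num)).differentiableAt
  have hLd : Differentiable ℝ (curveL g z) := curveL_diff g z hg hz hL
  have hhd : DifferentiableAt ℝ h σ := by
    apply DifferentiableAt.mul
    · apply DifferentiableAt.inv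
      · exact Complex.ofRealCLM.differentiable.differentiableAt.comp σ (hLd σ)
      · exact_mod_cast (hL σ).ne'
    · exact ((coord_deriv_contDiff z hz μ).differentiable one_ne_zero).differentiableAt
  have hre : (fun τ => (curveL g z τ)⁻¹ * deriv (fun s => (z s μ).re) τ) =
      fun τ => (h τ).re := by
    funext τ
    rw [deriv_re_comp _ _ (hzd τ)]
    simp [hh, Complex.mul_re, ← Complex.ofReal_inv]
  have him : (fun τ => (curveL g z τ)⁻¹ * deriv (fun s => (z s μ).im) τ) =
      fun τ => (h τ).im := by
    funext τ
    rw [deriv_im_comp _ _ (hzd τ)]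
    simp [hh, Complex.mul_im, ← Complex.ofReal_inv]
  have key : ∀ (L : ℝ) (w : ℂ), ((L : ℂ))⁻¹ * w =
      ((L⁻¹ * w.re : ℝ) : ℂ) + ((L⁻¹ * w.im : ℝ) : ℂ) * Complex.I := by
    intro L w
    apply Complex.ext <;>
      simp [Complex.mul_re, Complex.mul_im, ← Complex.ofReal_inv] <;> ring
  rw [D2z, D2x, D2t, hre, him, deriv_re_comp _ _ hhd, deriv_im_comp _ _ hhd]
  exact key _ _

lemma sum2_sub (f h : Fin n → Fin n → ℂ) :
    (∑ a, ∑ b, f a b) - (∑ a, ∑ b, h a b) = ∑ a, ∑ b, (f a b - h a b) := by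
  rw [← Finset.sum_sub_distrib]
  exact Finset.sum_congr rfl fun _ _ => (Finset.sum_sub_distrib _ _).symm

lemma sum2_add (f h : Fin n → Fin n → ℂ) :
    (∑ a, ∑ b, f a b) + (∑ a, ∑ b, h a b) = ∑ a, ∑ b, (f a b + h a b) := by
  rw [← Finset.sum_add_distrib]
  exact Finset.sum_congr rfl fun _ _ => (Finset.sum_add_distrib).symm

lemma sum2_mul (c : ℂ) (f : Fin n → Fin n → ℂ) :
    c * (∑ a, ∑ b, f a b) = ∑ a, ∑ b, c * f a b := by
  rw [Finset.mul_sum]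
  exact Finset.sum_congr rfl fun _ _ => Finset.mul_sum _ _ _

lemma sum2_antisymm (f : Fin n → Fin n → ℂ) (h : ∀ a b, f a b = - f b a) :
    ∑ a, ∑ b, f a b = 0 := by
  have h2 : (∑ a, ∑ b, f a b) = - ∑ a, ∑ b, f a b := by
    calc (∑ a, ∑ b, f a b) = ∑ b, ∑ a, f a b := Finset.sum_comm
    _ = ∑ b, ∑ a, -f b a :=
        Finset.sum_congr rfl fun b _ => Finset.sum_congr rfl fun a _ => by rw [← h]
    _ = - ∑ a, ∑ b, f a b := by simp
  linear_combination h2 / 2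

end Aux

/-- Imaginary part of the dual identity: along a complex geodesic,
`Σ g^R_{μγ̄} D²t^μ + Σ g^I_{μγ̄} D²x^μ
  = Σ (Φ^{γ+-} + ½∂^t_γ g^R) Dx Dx + Σ Φ^{γ-+} Dt Dt − Σ (∂^x_β g^R_{αγ̄} − F^t_{βγα}) Dt^α Dx^β`. -/
theorem dual_identity_imag_part {n : ℕ}
    (g : (Fin n → ℂ) → Matrix (Fin n) (Fin n) ℂ)
    (hg : MetricC1 g) (hherm : IsHermitianMetric g)
    (z : ℝ → Fin n → ℂ) (hz : ContDiff ℝ 2 z)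
    (hL : ∀ σ, 0 < curveL g z σ) (hgeo : GeodesicEq g z)
    (γ : Fin n) (σ : ℝ) :
    (∑ μ, gR g μ γ (z σ) * (D2t g z μ σ : ℂ)) +
        ∑ μ, gI g μ γ (z σ) * (D2x g z μ σ : ℂ) =
      (∑ α, ∑ β, (PhiPM g γ α β (z σ) + dT γ (gR g α β) (z σ) / 2) *
          (Dx g z α σ : ℂ) * (Dx g z β σ : ℂ)) +
        (∑ α, ∑ β, PhiMP g γ α β (z σ) * (Dt g z α σ : ℂ) * (Dt g z β σ : ℂ)) -
        ∑ α, ∑ β, (dX β (gR g α γ) (z σ) - Ft g β γ α (z σ)) *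
          (Dt g z α σ : ℂ) * (Dx g z β σ : ℂ) := by
  classical
  have hXR' : ∀ k i j : Fin n, ∃ r : ℝ, dX k (gR g i j) (z σ) = (r : ℂ) :=
    fun k i j => dX_gR_real g k i j (z σ)
  choose XR hXR using hXR'
  have hXI' : ∀ k i j : Fin n, ∃ r : ℝ, dX k (gI g i j) (z σ) = (r : ℂ) :=
    fun k i j => dX_gI_real g k i j (z σ)
  choose XI hXI using hXI'
  have hTR' : ∀ k i j : Fin n, ∃ r : ℝ, dT k (gR g i j) (z σ) = (r : ℂ) :=
    fun k i j => dT_gR_real g k i j (z σ)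
  choose TR hTR using hTR'
  have hTI' : ∀ k i j : Fin n, ∃ r : ℝ, dT k (gI g i j) (z σ) = (r : ℂ) :=
    fun k i j => dT_gI_real g k i j (z σ)
  choose TI hTI using hTI'
  have sXR : ∀ k i j, XR k i j = XR k j i := by
    intro k i j
    have h1 : dX k (gR g i j) (z σ) = dX k (gR g j i) (z σ) := by
      rw [gR_symm g hherm i j]
    rw [hXR, hXR] at h1
    exact_mod_cast h1
  have sTR : ∀ k i j, TR k i j = TR k j i := by
    intro k i j
    have h1 : dT k (gR g i j) (z σ) = dT k (gR g j i) (z σ) := by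
      rw [gR_symm g hherm i j]
    rw [hTR, hTR] at h1
    exact_mod_cast h1
  have sXI : ∀ k i j, XI k i j = -XI k j i := by
    intro k i j
    have h1 := dX_gI_swap g hherm k i j (z σ)
    rw [hXI, hXI] at h1
    exact_mod_cast h1
  have sTI : ∀ k i j, TI k i j = -TI k j i := by
    intro k i j
    have h1 := dT_gI_swap g hherm k i j (z σ)
    rw [hTI, hTI] at h1
    exact_mod_cast h1
  have hdx : ∀ k i j : Fin n,
      dX k (gF g i j) (z σ) = (XR k i j : ℂ) + (XI k i j : ℂ) * Complex.I := by
    intro k i j; rw [dX_gF_split g hg, hXR, hXI]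
  have hdt : ∀ k i j : Fin n,
      dT k (gF g i j) (z σ) = (TR k i j : ℂ) + (TI k i j : ℂ) * Complex.I := by
    intro k i j; rw [dT_gF_split g hg, hTR, hTI]
  have hDz : ∀ α, Dz g z α σ = (Dx g z α σ : ℂ) + (Dt g z α σ : ℂ) * Complex.I :=
    fun α => Dz_eq g z hz α σ
  have hD2z : ∀ μ, D2z g z μ σ = (D2x g z μ σ : ℂ) + (D2t g z μ σ : ℂ) * Complex.I :=
    fun μ => D2z_eq g z hg hz hL μ σ
  have h2I : (2 : ℂ) * Complex.I ≠ 0 := by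
    simp [Complex.I_ne_zero]
  apply mul_left_cancel₀ h2I
  have hA : (2 : ℂ) * Complex.I *
      ((∑ μ, gR g μ γ (z σ) * (D2t g z μ σ : ℂ)) +
        ∑ μ, gI g μ γ (z σ) * (D2x g z μ σ : ℂ)) =
      (∑ μ, g (z σ) μ γ * D2z g z μ σ) -
        (starRingEnd ℂ) (∑ μ, g (z σ) μ γ * D2z g z μ σ) := by
    rw [map_sum, ← Finset.sum_sub_distrib, ← Finset.sum_add_distrib, Finset.mul_sum]
    apply Finset.sum_congr rfl
    intro μ _
    rw [hD2z μ]
    simp only [gR, gI]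
    apply Complex.ext <;> simp [map_ofNat] <;> ring
  rw [hA, hgeo γ σ]
  simp only [map_sub, map_sum]
  rw [sub_sub_sub_comm, sum2_sub, sum2_sub, sum2_sub, mul_sub, mul_add,
    sum2_mul, sum2_mul, sum2_mul, sum2_add, sum2_sub]
  rw [← sub_eq_zero, sum2_sub]
  apply sum2_antisymm
  intro α β
  rcases eq_or_ne α β with rfl | hne
  · have z1 : XI γ α α = 0 := by linarith [sXI γ α α]
    have z2 : TI γ α α = 0 := by linarith [sTI γ α α]
    simp only [PhiPM, PhiMP, Ft, dWbar, dW, hdx, hdt, hXR, hXI, hTR, hTI, hDz, z1, z2]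
    apply Complex.ext <;> simp [map_ofNat] <;> ring
  · simp only [PhiPM, PhiMP, Ft, dWbar, dW, hdx, hdt, hXR, hXI, hTR, hTI, hDz]
    rw [sXR γ β α, sXI γ β α, sTR γ β α, sTI γ β α]
    apply Complex.ext <;> simp [map_ofNat] <;> ring
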